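/- Let $(V,E,c)$ be a connected network, $x \in V$ with finite total conductance $c(x) = \sum_{y\sim x} c_{xy} < \infty$ for all vertices, and let $\mu_x^{(A)}$ be the spectral measure $\mu_x^{(A)}(\cdot) = \|P^{(A)}(\cdot)\delta_x\|_{\ell^2}^2$ of the selfadjoint operator $A^*\overline{A}$. Then: (1) the first moment is $\int_0^\infty \lambda \, d\mu_x^{(A)}(\lambda) = c(x)$; (2) the second moment is $\int_0^\infty \lambda^2 \, d\mu_x^{(A)}(\lambda) = c(x)^2 + \sum_{y\sim x} c_{xy}^2$; (3) the variance is $\mathrm{cov}(\mu_x^{(A)}) = \sum_{y\sim x} c_{xy}^2 \le c(x)^2$. -/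

import Mathlib

open MeasureTheory

/-- The energy inner product `⟨f, g⟩ = ½ ∑_{(x,y)∈E} c_{xy} conj(f x - f y)(g x - g y)`. -/
noncomputable def energyProd {V : Type*} (E : Set (V × V)) (c : V → V → ℝ)
    (f g : V → ℂ) : ℂ :=
  (1 / 2) * ∑' e : E,
    (c e.1.1 e.1.2 : ℂ) * (starRingEnd ℂ) (f e.1.1 - f e.1.2) * (g e.1.1 - g e.1.2)

/-- The point mass `δ_x` as a complex-valued function. -/
noncomputable def pointMass {V : Type*} [DecidableEq V] (x : V) : V → ℂ :=
  fun z => if z = x then 1 else 0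

lemma tsum_single_aux {β : Type*} [DecidableEq β] (b : β) (v : ℂ) :
    Summable (fun e : β => if e = b then v else 0) ∧
      ∑' e : β, (if e = b then v else 0) = v := by
  constructor
  · exact summable_of_ne_finset_zero (s := {b}) (fun e he => if_neg (by simpa using he))
  · exact tsum_ite_eq b (fun _ => v)

lemma energy_diag {V : Type*} [DecidableEq V] (E : Set (V × V)) (c : V → V → ℝ)
    (hEsym : ∀ a b : V, (a, b) ∈ E → (b, a) ∈ E)
    (hloop : ∀ a : V, (a, a) ∉ E)
    (hcsym : ∀ a b : V, c a b = c b a)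
    (x : V) (hdx : Summable fun y : {y : V // (x, y) ∈ E} => c x y) :
    energyProd E c (pointMass x) (pointMass x)
      = ((∑' y : {y : V // (x, y) ∈ E}, c x y : ℝ) : ℂ) := by
  classical
  set g : E → ℂ := fun e => if e.1.1 = x then (c x e.1.2 : ℂ) else 0 with hg
  set h : E → ℂ := fun e => if e.1.2 = x then (c e.1.1 x : ℂ) else 0 with hh
  have hpt : ∀ e : E,
      (c e.1.1 e.1.2 : ℂ) * (starRingEnd ℂ) (pointMass x e.1.1 - pointMass x e.1.2)
        * (pointMass x e.1.1 - pointMass x e.1.2) = g e + h e := by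
    intro e
    by_cases h1 : e.1.1 = x <;> by_cases h2 : e.1.2 = x
    · exact absurd ((Prod.ext h1 h2 : e.1 = (x, x)) ▸ e.2) (hloop x)
    · simp [hg, hh, pointMass, h1, h2]
    · simp [hg, hh, pointMass, h1, h2, hcsym e.1.1 x]
    · simp [hg, hh, pointMass, h1, h2]
  -- sum of g
  have hig : Function.Injective (fun y : {y : V // (x, y) ∈ E} => (⟨(x, y.1), y.2⟩ : E)) :=
    fun a b hab => Subtype.ext (congrArg (fun e : E => e.1.2) hab)
  have hrg : Function.support g ⊆ Set.range (fun y : {y : V // (x, y) ∈ E} => (⟨(x, y.1), y.2⟩ : E)) := by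
    intro e he
    by_cases h1 : e.1.1 = x
    · have hmem : (x, e.1.2) ∈ E := (Prod.ext h1 rfl : e.1 = (x, e.1.2)) ▸ e.2
      exact ⟨⟨e.1.2, hmem⟩, Subtype.ext (Prod.ext h1.symm rfl)⟩
    · exact absurd (if_neg h1) he
  have hgc : (fun y : {y : V // (x, y) ∈ E} =>
      g (⟨(x, y.1), y.2⟩ : E)) = fun y => (c x y.1 : ℂ) := by
    funext y; simp [hg]
  have hsg : Summable g := by
    rw [← Function.Injective.summable_iff hig (fun e he => by
      by_contra hne; exact he (hrg hne))]
    rw [show (g ∘ fun y : {y : V // (x, y) ∈ E} => (⟨(x, y.1), y.2⟩ : E)) = fun y => (c x y.1 : ℂ)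
      from hgc]
    exact Complex.summable_ofReal.mpr hdx
  have htg : ∑' e : E, g e = ((∑' y : {y : V // (x, y) ∈ E}, c x y : ℝ) : ℂ) := by
    rw [← Function.Injective.tsum_eq hig hrg, hgc, Complex.ofReal_tsum]
  -- sum of h
  have hih : Function.Injective (fun y : {y : V // (x, y) ∈ E} =>
      (⟨(y.1, x), hEsym x y.1 y.2⟩ : E)) :=
    fun a b hab => Subtype.ext (congrArg (fun e : E => e.1.1) hab)
  have hrh : Function.support h ⊆ Set.range (fun y : {y : V // (x, y) ∈ E} =>
      (⟨(y.1, x), hEsym x y.1 y.2⟩ : E)) := by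
    intro e he
    by_cases h2 : e.1.2 = x
    · have hmem : (x, e.1.1) ∈ E := hEsym e.1.1 x ((Prod.ext rfl h2 : e.1 = (e.1.1, x)) ▸ e.2)
      exact ⟨⟨e.1.1, hmem⟩, Subtype.ext (Prod.ext rfl h2.symm)⟩
    · exact absurd (if_neg h2) he
  have hhc : (fun y : {y : V // (x, y) ∈ E} =>
      h (⟨(y.1, x), hEsym x y.1 y.2⟩ : E)) = fun y => (c x y.1 : ℂ) := by
    funext y; simp [hh, hcsym y.1 x]
  have hsh : Summable h := by
    rw [← Function.Injective.summable_iff hih (fun e he => by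
      by_contra hne; exact he (hrh hne))]
    rw [show (h ∘ fun y : {y : V // (x, y) ∈ E} => (⟨(y.1, x), hEsym x y.1 y.2⟩ : E))
      = fun y => (c x y.1 : ℂ) from hhc]
    exact Complex.summable_ofReal.mpr hdx
  have hth : ∑' e : E, h e = ((∑' y : {y : V // (x, y) ∈ E}, c x y : ℝ) : ℂ) := by
    rw [← Function.Injective.tsum_eq hih hrh, hhc, Complex.ofReal_tsum]
  rw [energyProd, tsum_congr hpt, Summable.tsum_add hsg hsh, htg, hth]
  ring

lemma energy_offdiag {V : Type*} [DecidableEq V] (E : Set (V × V)) (c : V → V → ℝ)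
    (hEsym : ∀ a b : V, (a, b) ∈ E → (b, a) ∈ E)
    (hloop : ∀ a : V, (a, a) ∉ E)
    (hcsym : ∀ a b : V, c a b = c b a)
    (x y : V) (hne : y ≠ x) [Decidable ((x, y) ∈ E)] :
    energyProd E c (pointMass y) (pointMass x)
      = if (x, y) ∈ E then (-(c x y) : ℂ) else 0 := by
  classical
  set G : E → ℂ := fun e => if e.1 = (x, y) then (-(c x y) : ℂ) else 0 with hG
  set H : E → ℂ := fun e => if e.1 = (y, x) then (-(c y x) : ℂ) else 0 with hH
  have hxyne : ((x, y) : V × V) ≠ (y, x) := by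
    intro hcontra
    exact hne ((Prod.ext_iff.mp hcontra).1).symm
  have hpt : ∀ e : E,
      (c e.1.1 e.1.2 : ℂ) * (starRingEnd ℂ) (pointMass y e.1.1 - pointMass y e.1.2)
        * (pointMass x e.1.1 - pointMass x e.1.2) = G e + H e := by
    intro e
    by_cases hxy : e.1 = (x, y)
    · have h1 : e.1.1 = x := congrArg Prod.fst hxy
      have h2 : e.1.2 = y := congrArg Prod.snd hxy
      have hyx : e.1 ≠ (y, x) := hxy ▸ hxyne
      simp [hG, hH, hxy, hyx, pointMass, h1, h2, hne, Ne.symm hne]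
    · by_cases hyx : e.1 = (y, x)
      · have h1 : e.1.1 = y := congrArg Prod.fst hyx
        have h2 : e.1.2 = x := congrArg Prod.snd hyx
        simp [hG, hH, hxy, hyx, pointMass, h1, h2, hne, Ne.symm hne]
      · rw [show G e = 0 from if_neg hxy, show H e = 0 from if_neg hyx, add_zero]
        by_cases a1 : e.1.1 = x <;> by_cases a2 : e.1.2 = x <;>
          by_cases b1 : e.1.1 = y <;> by_cases b2 : e.1.2 = y
        all_goals first
          | (exact absurd (b1.symm.trans a1) hne)
          | (exact absurd (a2.symm.trans b2) (Ne.symm hne))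
          | (exact absurd (Prod.ext a1 b2) hxy)
          | (exact absurd (Prod.ext b1 a2) hyx)
          | (simp [pointMass, a1, a2, b1, b2, hne, Ne.symm hne])
  rw [energyProd, tsum_congr hpt]
  by_cases hmem : (x, y) ∈ E
  · have hmem' : (y, x) ∈ E := hEsym x y hmem
    have hGeq : G = fun e : E => if e = (⟨(x, y), hmem⟩ : E) then (-(c x y) : ℂ) else 0 := by
      funext e
      simp only [hG, Subtype.ext_iff]
    have hHeq : H = fun e : E => if e = (⟨(y, x), hmem'⟩ : E) then (-(c y x) : ℂ) else 0 := by
      funext e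
      simp only [hH, Subtype.ext_iff]
    rw [hGeq, hHeq,
      Summable.tsum_add (tsum_single_aux _ _).1 (tsum_single_aux _ _).1,
      (tsum_single_aux _ _).2, (tsum_single_aux _ _).2, if_pos hmem,
      hcsym y x]
    push_cast
    ring
  · have hmem' : (y, x) ∉ E := fun hc => hmem (hEsym y x hc)
    have hGeq : ∀ e : E, G e = 0 := by
      intro e
      exact if_neg (fun hc => hmem (by rw [← hc]; exact e.2))
    have hHeq : ∀ e : E, H e = 0 := by
      intro e
      exact if_neg (fun hc => hmem' (by rw [← hc]; exact e.2))
    simp only [if_neg hmem]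
    rw [tsum_congr (fun e => by rw [hGeq e, hHeq e, add_zero]), tsum_zero, mul_zero]

lemma norm_sum_aux {V : Type*} [DecidableEq V] (E : Set (V × V)) (c : V → V → ℝ)
    (hEsym : ∀ a b : V, (a, b) ∈ E → (b, a) ∈ E)
    (hloop : ∀ a : V, (a, a) ∉ E)
    (hcsym : ∀ a b : V, c a b = c b a)
    (hcpos : ∀ p ∈ E, 0 < c p.1 p.2)
    (x : V) (hdx : Summable fun y : {y : V // (x, y) ∈ E} => c x y)
    (hQ : Summable fun y : {y : V // (x, y) ∈ E} => (c x y) ^ 2) :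
    ∑' y : V, ‖energyProd E c (pointMass y) (pointMass x)‖ ^ 2
      = (∑' y : {y : V // (x, y) ∈ E}, c x y) ^ 2
        + ∑' y : {y : V // (x, y) ∈ E}, (c x y) ^ 2 := by
  classical
  set S : ℝ := ∑' y : {y : V // (x, y) ∈ E}, c x y with hS
  have hn : ∀ y : V, ‖energyProd E c (pointMass y) (pointMass x)‖ ^ 2
      = (if y = x then S ^ 2 else 0) + (if (x, y) ∈ E then (c x y) ^ 2 else 0) := by
    intro y
    by_cases hyx : y = x
    · subst hyx
      rw [energy_diag E c hEsym hloop hcsym y hdx]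
      simp [hloop y, Complex.norm_real, sq_abs, ← hS]
    · rw [energy_offdiag E c hEsym hloop hcsym x y hyx]
      by_cases hmem : (x, y) ∈ E <;> simp [hmem, hyx, sq_abs]
  rw [tsum_congr hn]
  have hs1 : Summable fun y : V => if y = x then S ^ 2 else 0 :=
    summable_of_ne_finset_zero (s := {x}) (fun e he => if_neg (by simpa using he))
  have hind : (fun y : V => if (x, y) ∈ E then (c x y) ^ 2 else 0)
      = Set.indicator {y : V | (x, y) ∈ E} (fun y => (c x y) ^ 2) := by
    funext y
    simp [Set.indicator_apply]
  have hs2 : Summable fun y : V => if (x, y) ∈ E then (c x y) ^ 2 else 0 := by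
    rw [hind]
    exact summable_subtype_iff_indicator.mp hQ
  rw [Summable.tsum_add hs1 hs2, tsum_ite_eq x (fun _ => S ^ 2)]
  congr 1
  rw [hind, ← tsum_subtype]
  rfl


/-- Let `(V, E, c)` be a connected network in which every vertex
has finite total conductance, and let `μ = μ_x^{(A)}` be the spectral measure
of the selfadjoint operator `A* Ā` at `δ_x`: it is a probability measure whose
first and second moments are, respectively, `‖δ_x‖²_{H_E}` and
`∑_y |⟨δ_y, δ_x⟩_{H_E}|²` (the general moment identities for `μ_x^{(A)}`).
Then: (1) `∫ λ dμ = c(x)`; (2) `∫ λ² dμ = c(x)² + ∑_{y∼x} c_{xy}²`;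
(3) the variance is `∫ (λ - c(x))² dμ = ∑_{y∼x} c_{xy}² ≤ c(x)²`. -/
theorem stmt_14 {V : Type*} [Countable V] [DecidableEq V]
    (E : Set (V × V)) (hEsym : ∀ a b : V, (a, b) ∈ E → (b, a) ∈ E)
    (hloop : ∀ a : V, (a, a) ∉ E)
    (c : V → V → ℝ) (hcsym : ∀ a b : V, c a b = c b a)
    (hcpos : ∀ p ∈ E, 0 < c p.1 p.2)
    (hconn : ∀ a b : V, Relation.ReflTransGen (fun s t => (s, t) ∈ E) a b)
    (hdeg : ∀ z : V, Summable fun y : {y : V // (z, y) ∈ E} => c z y)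
    (x : V)
    (μ : Measure ℝ) [IsProbabilityMeasure μ]
    (hμ1 : ∫ t, t ∂μ = (energyProd E c (pointMass x) (pointMass x)).re)
    (hμ2 : ∫ t, t ^ 2 ∂μ =
      ∑' y : V, ‖energyProd E c (pointMass y) (pointMass x)‖ ^ 2) :
    (∫ t, t ∂μ = ∑' y : {y : V // (x, y) ∈ E}, c x y) ∧
    (∫ t, t ^ 2 ∂μ =
      (∑' y : {y : V // (x, y) ∈ E}, c x y) ^ 2 +
        ∑' y : {y : V // (x, y) ∈ E}, (c x y) ^ 2) ∧
    (∫ t, (t - ∑' y : {y : V // (x, y) ∈ E}, c x y) ^ 2 ∂μ =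
        ∑' y : {y : V // (x, y) ∈ E}, (c x y) ^ 2 ∧
      ∑' y : {y : V // (x, y) ∈ E}, (c x y) ^ 2 ≤
        (∑' y : {y : V // (x, y) ∈ E}, c x y) ^ 2) := by
  classical
  have hdx := hdeg x
  set S : ℝ := ∑' y : {y : V // (x, y) ∈ E}, c x y with hSdef
  set Q : ℝ := ∑' y : {y : V // (x, y) ∈ E}, (c x y) ^ 2 with hQdef
  have hle : ∀ y : {y : V // (x, y) ∈ E}, (c x y) ^ 2 ≤ S * c x y := by
    intro y
    have h1 : c x y.1 ≤ S := Summable.le_tsum hdx y (fun z _ => (hcpos (x, z.1) z.2).le)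
    have h0 : 0 ≤ c x y.1 := (hcpos (x, y.1) y.2).le
    rw [sq]
    exact mul_le_mul_of_nonneg_right h1 h0
  have hQsum : Summable fun y : {y : V // (x, y) ∈ E} => (c x y) ^ 2 :=
    Summable.of_nonneg_of_le (fun y => sq_nonneg _) hle (hdx.mul_left S)
  have hQnn : 0 ≤ Q := tsum_nonneg (fun y => sq_nonneg _)
  have hQS : Q ≤ S ^ 2 := by
    calc Q ≤ ∑' y : {y : V // (x, y) ∈ E}, S * c x y :=
          Summable.tsum_le_tsum hle hQsum (hdx.mul_left S)
      _ = S * S := by rw [tsum_mul_left]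
      _ = S ^ 2 := (sq S).symm
  have h1 : ∫ t, t ∂μ = S := by
    rw [hμ1, energy_diag E c hEsym hloop hcsym x hdx, Complex.ofReal_re]
  have h2 : ∫ t, t ^ 2 ∂μ = S ^ 2 + Q := by
    rw [hμ2, norm_sum_aux E c hEsym hloop hcsym hcpos x hdx hQsum]
  refine ⟨h1, h2, ?_, hQS⟩
  by_cases hint : Integrable (fun t => t ^ 2) μ
  · have hintt : Integrable (fun t : ℝ => t) μ := by
      have hb : Integrable (fun t : ℝ => t ^ 2 + 1) μ := hint.add (integrable_const 1)
      refine hb.mono' aestronglyMeasurable_id (Filter.Eventually.of_forall fun t => ?_)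
      have : ‖t‖ = |t| := rfl
      rw [this]
      nlinarith [sq_nonneg (|t| - 1), sq_abs t, abs_nonneg t]
    have he : (fun t : ℝ => (t - S) ^ 2) = fun t => (t ^ 2 - (2 * S) * t) + S ^ 2 := by
      funext t; ring
    have hA : Integrable (fun t : ℝ => t ^ 2 - 2 * S * t) μ :=
      hint.sub (hintt.const_mul (2 * S))
    rw [he, integral_add hA (integrable_const _),
      integral_sub hint (hintt.const_mul (2 * S)), integral_const_mul, integral_const,
      h1, h2]
    simp [measure_univ]
    ring
  · have h0 : ∫ t, t ^ 2 ∂μ = 0 := integral_undef hint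
    have hSQ : S ^ 2 + Q = 0 := by rw [← h2, h0]
    have hQ0 : Q = 0 := by nlinarith [sq_nonneg S]
    have hS0 : S = 0 := by
      have : S ^ 2 = 0 := by linarith
      exact pow_eq_zero_iff (n := 2) (by norm_num) |>.mp this
    rw [hS0, hQ0]
    simpa using h0
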